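/- In ℝⁿ with n ≥ 1, let f : ℝⁿ → ℝ be f(0) = −1 and f(x) = 0 for x ≠ 0, and define u : ℝⁿ → ℝ by u(0) = 1 and u(x) = 0 for x ≠ 0. Then u is upper semicontinuous and is a viscosity subsolution of the equation −Δw/(1+|Δw|) + f(x) = 0 on ℝⁿ: for every C² function φ and every local maximum point x₀ of u − φ, one has −Tr(D²φ(x₀))/(1 + |Tr(D²φ(x₀))|) + f(x₀) ≤ 0. Since u attains a positive maximum at 0 but is not constant, the strong maximum principle fails for this degenerate operator. -/

import Mathlib

open Classical
open Filter Topology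

lemma second_deriv_nonneg {g : ℝ → ℝ} (hg : ContDiff ℝ 2 g) (h : IsLocalMin g 0) :
    0 ≤ deriv (deriv g) 0 := by
  by_contra hc
  push_neg at hc
  set c := deriv (deriv g) 0 with hcdef
  have hg1 : ContDiff ℝ 1 (deriv g) := by
    have h2 := hg.fderiv_right (m := 1) (by norm_num)
    have : ContDiff ℝ 1 (fun x => fderiv ℝ g x 1) :=
      (ContinuousLinearMap.apply ℝ ℝ (1:ℝ)).contDiff.comp h2
    simpa [fderiv_apply_one_eq_deriv] using this
  have hgd : Differentiable ℝ g := hg.differentiable (by norm_num)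
  have hd0 : deriv g 0 = 0 := h.deriv_eq_zero
  have H : HasDerivAt (deriv g) c 0 := ((hg1.differentiable (by norm_num)) 0).hasDerivAt
  have hslope : Tendsto (slope (deriv g) 0) (𝓝[≠] 0) (𝓝 c) :=
    hasDerivAt_iff_tendsto_slope.mp H
  have hev : ∀ᶠ t in 𝓝[≠] (0:ℝ), slope (deriv g) 0 t < 0 :=
    hslope.eventually (eventually_lt_nhds hc)
  rw [eventually_nhdsWithin_iff] at hev
  obtain ⟨δ, hδ, hδ'⟩ := Metric.eventually_nhds_iff.mp hev
  obtain ⟨ε, hε, hεmin⟩ := Metric.eventually_nhds_iff.mp h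
  set t : ℝ := min δ ε / 2 with ht
  have ht0 : 0 < t := by positivity
  have htδ : t < δ := lt_of_lt_of_le (half_lt_self (lt_min hδ hε)) (min_le_left _ _)
  have htε : t < ε := lt_of_lt_of_le (half_lt_self (lt_min hδ hε)) (min_le_right _ _)
  -- deriv g negative on Ioo 0 t
  have hneg : ∀ x ∈ Set.Ioo (0:ℝ) t, deriv g x < 0 := by
    intro x hx
    have hxδ : dist x 0 < δ := by
      rw [Real.dist_eq, sub_zero, abs_of_pos hx.1]
      exact hx.2.trans htδ
    have hs := hδ' hxδ (by simpa using hx.1.ne')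
    rw [slope_def_field] at hs
    have : (deriv g x - deriv g 0) / (x - 0) < 0 := by
      simpa [div_eq_inv_mul] using hs
    rw [hd0, sub_zero, sub_zero] at this
    exact (div_neg_iff.mp this).resolve_left (fun h' => absurd hx.1 (not_lt.mpr h'.2.le)) |>.1
  have hanti : StrictAntiOn g (Set.Icc 0 t) := by
    apply strictAntiOn_of_deriv_neg (convex_Icc 0 t) (hgd.continuous.continuousOn)
    intro x hx
    rw [interior_Icc] at hx
    exact hneg x hx
  have h1 : g t < g 0 := hanti (Set.left_mem_Icc.mpr ht0.le) (Set.right_mem_Icc.mpr ht0.le) ht0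
  have h2 : g 0 ≤ g t := hεmin (by rw [Real.dist_eq, sub_zero, abs_of_pos ht0]; exact htε)
  exact absurd h1 (not_lt.mpr h2)

lemma dir_second_nonneg {n : ℕ} {φ : EuclideanSpace ℝ (Fin n) → ℝ} (hφ : ContDiff ℝ 2 φ)
    {x₀ e : EuclideanSpace ℝ (Fin n)} (h : IsLocalMin φ x₀) :
    0 ≤ fderiv ℝ (fun y => fderiv ℝ φ y e) x₀ e := by
  set L : ℝ → EuclideanSpace ℝ (Fin n) := fun t => x₀ + t • e with hLdef
  have hL : ContDiff ℝ 2 L := contDiff_const.add (contDiff_id.smul contDiff_const)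
  have hL0 : L 0 = x₀ := by simp [hLdef]
  set g : ℝ → ℝ := fun t => φ (L t) with hgdef
  have hg : ContDiff ℝ 2 g := hφ.comp hL
  have htend : Filter.Tendsto L (𝓝 0) (𝓝 x₀) := by
    simpa [hL0] using hL.continuous.tendsto 0
  have hmin : IsLocalMin g 0 := by
    have := htend.eventually h
    simpa [IsLocalMin, IsMinFilter, hgdef, hL0] using this
  have hLd : ∀ t : ℝ, HasDerivAt L e t := by
    intro t
    simpa [hLdef] using ((hasDerivAt_id t).smul_const e).const_add x₀
  have hder : deriv g = fun t => fderiv ℝ φ (L t) e := by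
    funext t
    exact (((hφ.differentiable (by norm_num) (L t)).hasFDerivAt).comp_hasDerivAt t (hLd t)).deriv
  have hF : ContDiff ℝ 1 (fun y => fderiv ℝ φ y e) :=
    (ContinuousLinearMap.apply ℝ ℝ e).contDiff.comp (hφ.fderiv_right (m := 1) (by norm_num))
  have hder2 : HasDerivAt (deriv g) (fderiv ℝ (fun y => fderiv ℝ φ y e) x₀ e) 0 := by
    rw [hder]
    have := ((hF.differentiable (by norm_num) (L 0)).hasFDerivAt).comp_hasDerivAt 0 (hLd 0)
    rw [hL0] at this
    exact this
  have := second_deriv_nonneg hg hmin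
  rwa [hder2.deriv] at this

/-- The Laplacian of `φ` at `x`: the trace of the Hessian. -/
noncomputable def lap (n : ℕ) (φ : EuclideanSpace ℝ (Fin n) → ℝ)
    (x : EuclideanSpace ℝ (Fin n)) : ℝ :=
  ∑ i : Fin n,
    fderiv ℝ (fun y => fderiv ℝ φ y (EuclideanSpace.single i 1)) x (EuclideanSpace.single i 1)

theorem counterexample_SMP (n : ℕ) (hn : 0 < n)
    (f u : EuclideanSpace ℝ (Fin n) → ℝ)
    (hf : f = fun x => if x = 0 then (-1 : ℝ) else 0)
    (hu : u = fun x => if x = 0 then (1 : ℝ) else 0) :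
    UpperSemicontinuous u ∧
    (∀ φ : EuclideanSpace ℝ (Fin n) → ℝ, ContDiff ℝ 2 φ →
      ∀ x₀ : EuclideanSpace ℝ (Fin n), IsLocalMax (fun x => u x - φ x) x₀ →
        -(lap n φ x₀) / (1 + |lap n φ x₀|) + f x₀ ≤ 0) ∧
    (∀ x, u x ≤ u 0) ∧ 0 < u 0 ∧ ¬(∀ x, u x = u 0) := by
  have hu0 : u 0 = 1 := by simp [hu]
  refine ⟨?_, ?_, ?_, ?_, ?_⟩
  · -- upper semicontinuous
    intro x y hy
    by_cases hx : x = 0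
    · subst hx
      rw [hu0] at hy
      filter_upwards with x'
      have : u x' ≤ 1 := by by_cases h : x' = 0 <;> simp [hu, h]
      linarith
    · have hx0 : u x = 0 := by simp [hu, hx]
      rw [hx0] at hy
      filter_upwards [isOpen_compl_singleton.eventually_mem hx] with x' hx'
      have : u x' = 0 := by
        simp only [hu]
        rw [if_neg (by simpa using hx')]
      linarith
  · -- viscosity subsolution
    intro φ hφ x₀ hmax
    set Lp := lap n φ x₀ with hLp
    have hpos : (0:ℝ) < 1 + |Lp| := by have := abs_nonneg Lp; linarith
    by_cases hx : x₀ = 0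
    · have hfx : f x₀ = -1 := by simp [hf, hx]
      rw [hfx]
      have h1 : -Lp ≤ 1 + |Lp| := by
        have := neg_le_abs Lp; linarith
      have := (div_le_one hpos).mpr h1
      linarith
    · have hfx : f x₀ = 0 := by simp [hf, hx]
      have hev : ∀ᶠ x in 𝓝 x₀, u x = 0 := by
        filter_upwards [isOpen_compl_singleton.eventually_mem hx] with x' hx'
        simp only [hu]
        rw [if_neg (by simpa using hx')]
      have hux : u x₀ = 0 := by simp [hu, hx]
      have hmin : IsLocalMin φ x₀ := by
        have := hmax.and hev
        filter_upwards [this] with x' hx'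
        have h1 : u x' - φ x' ≤ u x₀ - φ x₀ := hx'.1
        rw [hx'.2, hux] at h1
        linarith
      have hL : 0 ≤ Lp := by
        rw [hLp, lap]
        exact Finset.sum_nonneg fun i _ => dir_second_nonneg hφ hmin
      have : -Lp / (1 + |Lp|) ≤ 0 :=
        div_nonpos_of_nonpos_of_nonneg (by linarith) hpos.le
      linarith
  · intro x
    rw [hu0]
    by_cases h : x = 0 <;> simp [hu, h]
  · rw [hu0]; norm_num
  · intro hall
    have hne : (EuclideanSpace.single (⟨0, hn⟩ : Fin n) (1:ℝ)) ≠ 0 := by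
      intro h
      have := congrArg (fun v => v (⟨0, hn⟩ : Fin n)) h
      simp [EuclideanSpace.single_apply] at this
    have := hall (EuclideanSpace.single (⟨0, hn⟩ : Fin n) (1:ℝ))
    rw [hu0, hu] at this
    simp only [if_neg hne] at this
    norm_num at this
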